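/- In any graph G with matching M, if P is an alternating path (with respect to M) from an unmatched vertex x₀ to a vertex x, and G is bipartite, then the shortest path from x₀ to x contained in P (as a subpath of the edge set of P) is simple and alternating. -/

import Mathlib

open SimpleGraph

/-- A walk is alternating with respect to a matching `M` if its edges alternate
between belonging to `M` and not. -/
def SimpleGraph.Walk.IsAlternating {V : Type*} {G : SimpleGraph V}
    (M : G.Subgraph) {u v : V} (p : G.Walk u v) : Prop :=
  List.Chain' (fun e f => (e ∈ M.edgeSet ↔ f ∉ M.edgeSet)) p.edges

private lemma fin2_aux (x y z : Fin 2) (h : x ≠ y) : (y ≠ z ↔ x = z) := by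
  revert h; revert x y z; decide

private lemma darts_charac {V : Type*} {G : SimpleGraph V} (M : G.Subgraph)
    (c : G.Coloring (Fin 2)) (a : Fin 2) :
    ∀ {u v : V} (p : G.Walk u v), p.IsAlternating M →
      (∀ e, p.edges.head? = some e → (e ∈ M.edgeSet ↔ c u ≠ a)) →
      ∀ d ∈ p.darts, (d.edge ∈ M.edgeSet ↔ c d.fst ≠ a) := by
  intro u v p
  induction p with
  | nil => intro _ _ d hd; simp at hd
  | @cons u w v h p ih =>
    intro halt hhead d hd
    rw [SimpleGraph.Walk.darts_cons, List.mem_cons] at hd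
    have he : (SimpleGraph.Walk.cons h p).edges = s(u, w) :: p.edges :=
      SimpleGraph.Walk.edges_cons h p
    have h1 : s(u, w) ∈ M.edgeSet ↔ c u ≠ a := by
      apply hhead; rw [he]; rfl
    rcases hd with rfl | hd
    · simpa [SimpleGraph.Dart.edge] using h1
    · refine ih ?_ ?_ d hd
      · have := halt
        unfold SimpleGraph.Walk.IsAlternating at this ⊢
        rw [he] at this
        exact this.tail
      intro f hf
      cases hp : p.edges with
      | nil => rw [hp] at hf; simp at hf
      | cons f' t =>
          rw [hp, List.head?_cons] at hf
          have hf' : f' = f := Option.some.inj hf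
          subst hf'
          have halt' := halt
          unfold SimpleGraph.Walk.IsAlternating at halt'
          rw [he, hp] at halt'
          have hrel := (List.isChain_cons_cons.mp halt').1
          have hcuw : c u ≠ c w := c.valid h
          have hiff : f' ∈ M.edgeSet ↔ ¬ (s(u,w) ∈ M.edgeSet) := by tauto
          have hfin := fin2_aux (c u) (c w) a hcuw
          rw [hiff, h1]
          tauto

private lemma alt_of_darts {V : Type*} {G : SimpleGraph V} (M : G.Subgraph)
    (c : G.Coloring (Fin 2)) (a : Fin 2) :
    ∀ {u v : V} (q : G.Walk u v),
      (∀ d ∈ q.darts, (d.edge ∈ M.edgeSet ↔ c d.fst ≠ a)) →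
      q.IsAlternating M := by
  intro u v q
  induction q with
  | nil => intro _; simp [SimpleGraph.Walk.IsAlternating, List.Chain']
  | @cons u w v h q ih =>
    intro hd
    cases q with
    | nil => simp [SimpleGraph.Walk.IsAlternating, List.Chain']
    | @cons _ y _ h' q' =>
      unfold SimpleGraph.Walk.IsAlternating
      rw [SimpleGraph.Walk.edges_cons, SimpleGraph.Walk.edges_cons,
        List.Chain', List.isChain_cons_cons]
      have hd1 : (⟨(u, w), h⟩ : G.Dart) ∈ (SimpleGraph.Walk.cons h (SimpleGraph.Walk.cons h' q')).darts := by
        rw [SimpleGraph.Walk.darts_cons]; exact List.mem_cons_self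
      have hd2 : (⟨(w, y), h'⟩ : G.Dart) ∈ (SimpleGraph.Walk.cons h (SimpleGraph.Walk.cons h' q')).darts := by
        rw [SimpleGraph.Walk.darts_cons, SimpleGraph.Walk.darts_cons]
        exact List.mem_cons_of_mem _ List.mem_cons_self
      constructor
      · have h1 : s(u, w) ∈ M.edgeSet ↔ c u ≠ a := by
          simpa [SimpleGraph.Dart.edge] using hd ⟨(u, w), h⟩ hd1
        have h2 : s(w, y) ∈ M.edgeSet ↔ c w ≠ a := by
          simpa [SimpleGraph.Dart.edge] using hd ⟨(w, y), h'⟩ hd2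
        have hcuw : c u ≠ c w := c.valid h
        have hfin := fin2_aux (c u) (c w) a hcuw
        rw [h1, h2]
        tauto
      · have hsub : ∀ d ∈ (SimpleGraph.Walk.cons h' q').darts,
            (d.edge ∈ M.edgeSet ↔ c d.fst ≠ a) := by
          intro d hdd
          apply hd
          rw [SimpleGraph.Walk.darts_cons]
          exact List.mem_cons_of_mem _ hdd
        have := ih hsub
        unfold SimpleGraph.Walk.IsAlternating at this
        rwa [SimpleGraph.Walk.edges_cons] at this

/-- In a bipartite graph, an alternating walk from an unmatched vertex `x₀` to a
vertex `x` contains a simple alternating path from `x₀` to `x`. -/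
theorem alternating_walk_contains_alternating_path
    {V : Type*} (G : SimpleGraph V) (hbip : G.Colorable 2)
    (M : G.Subgraph) (hM : M.IsMatching)
    (x₀ x : V) (hx₀ : x₀ ∉ M.verts)
    (p : G.Walk x₀ x) (halt : p.IsAlternating M) :
    ∃ q : G.Walk x₀ x, q.IsPath ∧ (∀ e ∈ q.edges, e ∈ p.edges) ∧
      q.IsAlternating M := by
  classical
  obtain ⟨c⟩ := hbip
  refine ⟨p.bypass, p.bypass_isPath, fun e he => p.edges_bypass_subset he, ?_⟩
  apply alt_of_darts M c (c x₀)
  intro d hd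
  apply darts_charac M c (c x₀) p halt _ d (p.darts_bypass_subset hd)
  intro e he
  cases p with
  | nil => simp at he
  | @cons _ w _ h p' =>
    rw [SimpleGraph.Walk.edges_cons, List.head?_cons] at he
    have he' : s(x₀, w) = e := Option.some.inj he
    subst he'
    constructor
    · intro hmem
      exact absurd (M.edge_vert (SimpleGraph.Subgraph.mem_edgeSet.mp hmem)) hx₀
    · intro hne; exact absurd rfl hne
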